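/- If the covariance matrix of gradients C = E[∇f(X)∇f(X)ᵀ] has eigendecomposition C = W Λ Wᵀ with eigenvalues λ₁ ≥ … ≥ λ_m and λ_{r+1} = … = λ_m = 0, then for the inactive eigenvector matrix W₂ (columns the eigenvectors for the zero eigenvalues), W₂ᵀ ∇f(X) = 0 almost surely; consequently if the support of ρ is open and connected, f is almost surely constant along directions in the span of W₂. -/

import Mathlib

open Matrix MeasureTheory

/-- If the gradient covariance matrix `C = E[∇f(X)∇f(X)ᵀ]` has eigendecomposition
`C = W Λ Wᵀ` with `λ_{r+1} = … = λ_m = 0`, then the inactive eigenvector columns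
kill the gradient almost surely: `W₂ᵀ ∇f(X) = 0` a.s.; and, the support `S` of the
input density being open and connected, `f` is constant along directions in the
span of the inactive eigenvectors (along segments contained in `S`). -/
theorem inactive_subspace_gradient_vanishes {m : ℕ} {Ω : Type*} [MeasurableSpace Ω]
    (μ : Measure Ω) [IsProbabilityMeasure μ]
    (f : (Fin m → ℝ) → ℝ) (hf : ContDiff ℝ 1 f)
    (X : Ω → (Fin m → ℝ)) (hX : Measurable X)
    (g : Ω → Fin m → ℝ)
    (hg : g = fun ω i => fderiv ℝ f (X ω) (Pi.single i 1))
    (hInt : ∀ i j, Integrable (fun ω => g ω i * g ω j) μ)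
    (C : Matrix (Fin m) (Fin m) ℝ)
    (hC : C = Matrix.of fun i j => ∫ ω, g ω i * g ω j ∂μ)
    (W : Matrix (Fin m) (Fin m) ℝ) (Λ : Fin m → ℝ)
    (hW : W * Wᵀ = 1 ∧ Wᵀ * W = 1)
    (hdecomp : C = W * Matrix.diagonal Λ * Wᵀ)
    (hord : ∀ i j : Fin m, i ≤ j → Λ j ≤ Λ i)
    (r : ℕ) (hzero : ∀ i : Fin m, r ≤ (i : ℕ) → Λ i = 0)
    (S : Set (Fin m → ℝ)) (hSopen : IsOpen S) (hSconn : IsConnected S)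
    (hsupp : ∀ U : Set (Fin m → ℝ), IsOpen U → U ⊆ S → U.Nonempty → 0 < μ (X ⁻¹' U))
    (hXS : ∀ᵐ ω ∂μ, X ω ∈ S) :
    (∀ i : Fin m, r ≤ (i : ℕ) → ∀ᵐ ω ∂μ, (fun a => W a i) ⬝ᵥ g ω = 0) ∧
      ∀ x ∈ S, ∀ y ∈ S,
        y - x ∈ Submodule.span ℝ
            {c : Fin m → ℝ | ∃ i : Fin m, r ≤ (i : ℕ) ∧ c = fun a => W a i} →
          segment ℝ x y ⊆ S → f x = f y := by
  obtain ⟨hW1, hW2⟩ := hW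
  have hfd : Differentiable ℝ f := hf.differentiable one_ne_zero
  have hcont : Continuous fun x => fderiv ℝ f x := hf.continuous_fderiv one_ne_zero
  -- expansion of a derivative in coordinates
  have expand : ∀ (z : Fin m → ℝ) (v : Fin m → ℝ),
      fderiv ℝ f z v = ∑ a, v a * fderiv ℝ f z (Pi.single a 1) := by
    intro z v
    have hv : v = ∑ a, v a • (Pi.single a 1 : Fin m → ℝ) := by
      ext j; simp [Pi.single_apply]
    conv_lhs => rw [hv]
    rw [map_sum]; simp [smul_eq_mul]
  -- the directional derivative functions
  set h : Fin m → (Fin m → ℝ) → ℝ :=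
    fun i x => ∑ a, W a i * fderiv ℝ f x (Pi.single a 1) with hh
  have hgh : ∀ i ω, (fun a => W a i) ⬝ᵥ g ω = h i (X ω) := by
    intro i ω; simp [hg, hh, dotProduct]
  have hcont_h : ∀ i, Continuous (h i) := by
    intro i
    exact continuous_finset_sum _ fun a _ =>
      continuous_const.mul (hcont.clm_apply continuous_const)
  -- step 1 : the integral of the squared directional derivative is Λ i
  have hWCW : ∀ i, (Wᵀ * C * W) i i = Λ i := by
    intro i
    have : Wᵀ * C * W = Matrix.diagonal Λ := by
      rw [hdecomp]
      calc Wᵀ * (W * Matrix.diagonal Λ * Wᵀ) * W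
          = (Wᵀ * W) * Matrix.diagonal Λ * (Wᵀ * W) := by
            simp only [Matrix.mul_assoc]
        _ = Matrix.diagonal Λ := by rw [hW2]; simp
    rw [this]; simp
  have key : ∀ i : Fin m, ∫ ω, ((fun a => W a i) ⬝ᵥ g ω)^2 ∂μ = Λ i := by
    intro i
    have hpt : ∀ ω, ((fun a => W a i) ⬝ᵥ g ω)^2
        = ∑ a, ∑ b, (W a i * W b i) * (g ω a * g ω b) := by
      intro ω
      rw [sq, dotProduct, Finset.sum_mul_sum]
      congr 1; ext a; congr 1; ext b; ring
    calc ∫ ω, ((fun a => W a i) ⬝ᵥ g ω)^2 ∂μ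
        = ∫ ω, ∑ a, ∑ b, (W a i * W b i) * (g ω a * g ω b) ∂μ := by
          simp only [hpt]
      _ = ∑ a, ∑ b, (W a i * W b i) * ∫ ω, g ω a * g ω b ∂μ := by
          rw [integral_finset_sum _ fun a _ =>
            integrable_finset_sum _ fun b _ => (hInt a b).const_mul _]
          refine Finset.sum_congr rfl fun a _ => ?_
          rw [integral_finset_sum _ fun b _ => (hInt a b).const_mul _]
          refine Finset.sum_congr rfl fun b _ => ?_
          rw [integral_const_mul]
      _ = (Wᵀ * C * W) i i := by
          rw [hC]
          simp only [Matrix.mul_apply, Matrix.transpose_apply, Matrix.of_apply,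
            Finset.sum_mul]
          rw [Finset.sum_comm]
          refine Finset.sum_congr rfl fun a _ => Finset.sum_congr rfl fun b _ => ?_
          ring
      _ = Λ i := hWCW i
  -- step 2 : a.e. vanishing
  have haezero : ∀ i : Fin m, r ≤ (i : ℕ) → ∀ᵐ ω ∂μ, (fun a => W a i) ⬝ᵥ g ω = 0 := by
    intro i hi
    have hint : Integrable (fun ω => ((fun a => W a i) ⬝ᵥ g ω)^2) μ := by
      have : (fun ω => ((fun a => W a i) ⬝ᵥ g ω)^2)
          = fun ω => ∑ a, ∑ b, (W a i * W b i) * (g ω a * g ω b) := by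
        ext ω
        rw [sq, dotProduct, Finset.sum_mul_sum]
        congr 1; ext a; congr 1; ext b; ring
      rw [this]
      exact integrable_finset_sum _ fun a _ =>
        integrable_finset_sum _ fun b _ => (hInt a b).const_mul _
    have h0 : ∫ ω, ((fun a => W a i) ⬝ᵥ g ω)^2 ∂μ = 0 := by
      rw [key i, hzero i hi]
    have := (integral_eq_zero_iff_of_nonneg (fun ω => sq_nonneg _) hint).mp h0
    filter_upwards [this] with ω hω
    exact pow_eq_zero_iff (two_ne_zero).symm.symm |>.mp hω
  -- step 3 : vanishing everywhere on S
  have hzeroS : ∀ i : Fin m, r ≤ (i : ℕ) → ∀ x ∈ S, h i x = 0 := by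
    intro i hi
    by_contra hcon
    push_neg at hcon
    obtain ⟨x, hxS, hx⟩ := hcon
    set U : Set (Fin m → ℝ) := S ∩ (h i) ⁻¹' {(0:ℝ)}ᶜ with hU
    have hUopen : IsOpen U :=
      hSopen.inter (isOpen_compl_singleton.preimage (hcont_h i))
    have hpos := hsupp U hUopen Set.inter_subset_left ⟨x, hxS, hx⟩
    have hae : ∀ᵐ ω ∂μ, X ω ∉ U := by
      filter_upwards [haezero i hi, hXS] with ω h1 h2
      rintro ⟨-, hne⟩
      exact hne (by rw [← hgh i ω]; exact h1)
    have : μ (X ⁻¹' U) = 0 := by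
      rw [ae_iff] at hae
      simpa [Set.preimage] using hae
    exact absurd this hpos.ne'
  -- step 4 : the kernel contains the span
  have hker : ∀ z ∈ S, ∀ v ∈ Submodule.span ℝ
      {c : Fin m → ℝ | ∃ i : Fin m, r ≤ (i : ℕ) ∧ c = fun a => W a i},
      fderiv ℝ f z v = 0 := by
    intro z hz v hv
    induction hv using Submodule.span_induction with
    | mem c hc =>
        obtain ⟨i, hi, rfl⟩ := hc
        rw [expand]
        exact hzeroS i hi z hz
    | zero => simp
    | add u w _ _ hu hw => rw [map_add, hu, hw, add_zero]
    | smul a u _ hu => rw [_root_.map_smul, hu, smul_zero]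
  refine ⟨haezero, fun x hx y hy hspan hseg => ?_⟩
  set γ : ℝ → (Fin m → ℝ) := fun t => x + t • (y - x) with hγ
  have hγseg : ∀ t ∈ Set.Icc (0:ℝ) 1, γ t ∈ S := by
    intro t ht
    apply hseg
    rw [segment_eq_image' ℝ x y]
    exact ⟨t, ht, rfl⟩
  have hderiv : ∀ t ∈ Set.Icc (0:ℝ) 1, HasDerivAt (fun s => f (γ s)) 0 t := by
    intro t ht
    have h1 : HasDerivAt γ (y - x) t := by
      simpa [hγ] using ((hasDerivAt_id t).smul_const (y - x)).const_add x
    have h2 := (hfd (γ t)).hasFDerivAt.comp_hasDerivAt t h1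
    have h3 : fderiv ℝ f (γ t) (y - x) = 0 := hker _ (hγseg t ht) _ hspan
    rw [h3] at h2
    exact h2
  have hc : ContinuousOn (fun s => f (γ s)) (Set.Icc 0 1) :=
    (hf.continuous.comp (continuous_const.add (continuous_id.smul continuous_const))).continuousOn
  have := constant_of_has_deriv_right_zero hc
    (fun t ht => (hderiv t (Set.Ico_subset_Icc_self ht)).hasDerivWithinAt)
    1 (by norm_num)
  simpa [hγ] using this.symm
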